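/- arXiv:math/0605365 — 2 statements merged into one kernel-verified Lean document; each statement's English description precedes it below -/
import Mathlib

section
/- Negativity of the Lyapunov drift (key step of Lemma 2.1's application): Assume b satisfies (H-2) and the pair (b,a) satisfies (H-3) with constants K, L > 0. Fix c with 0 < c ≤ 1/K and set r(x) = (2 + ‖x‖)‖x‖/(1 + ‖x‖)². Then there exists L' > 0 such that for every x ∈ ℝ^d with ‖x‖ ≥ L', c (r(x)/‖x‖) ⟨x, b(x)⟩ + (c² r(x)²/(2‖x‖²)) ⟨x, a(x)x⟩ ≤ −(c/2) r(x) |⟨x, b(x)⟩| / ‖x‖, and in particular this quantity is ≤ 0. (The left-hand side equals 𝔇V(x) = ⟨∇V(x), b(x)⟩ + (1/2)⟨∇V(x), a(x)∇V(x)⟩ for V(x) = c‖x‖²/(1+‖x‖).) -/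
open scoped RealInnerProductSpace

/-- Negativity of the Lyapunov drift: under (H-2) and (H-3), with `0 < c ≤ 1/K` and
`r(x) = (2 + ‖x‖)‖x‖/(1 + ‖x‖)²`, there is `L' > 0` such that for `‖x‖ ≥ L'`,
`c (r(x)/‖x‖)⟨x, b(x)⟩ + (c² r(x)²/(2‖x‖²))⟨x, a(x)x⟩ ≤ −(c/2) r(x)|⟨x, b(x)⟩|/‖x‖ ≤ 0`. -/
theorem lyapunov_drift_negativity {d : ℕ} (hd : 1 ≤ d)
    (b : EuclideanSpace ℝ (Fin d) → EuclideanSpace ℝ (Fin d))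
    (a : EuclideanSpace ℝ (Fin d) →
      (EuclideanSpace ℝ (Fin d) →ₗ[ℝ] EuclideanSpace ℝ (Fin d)))
    (ha_symm : ∀ x u v, ⟪a x u, v⟫ = ⟪u, a x v⟫)
    (ha_psd : ∀ x v, 0 ≤ ⟪v, a x v⟫)
    (hH2 : ∀ R : ℝ, 0 < R → ∃ L₀ : ℝ, 0 < L₀ ∧ ∀ x, L₀ ≤ ‖x‖ → ⟪x, b x⟫ ≤ -R * ‖x‖)
    (K L : ℝ) (hK : 0 < K) (hL : 0 < L)
    (hH3 : ∀ x, L < ‖x‖ → ⟪x, a x x⟫ ≤ K * ‖x‖ * |⟪x, b x⟫|)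
    (c : ℝ) (hc : 0 < c) (hcK : c ≤ 1 / K) :
    ∃ L' : ℝ, 0 < L' ∧ ∀ x : EuclideanSpace ℝ (Fin d), L' ≤ ‖x‖ →
      (c * ((2 + ‖x‖) * ‖x‖ / (1 + ‖x‖) ^ 2) / ‖x‖) * ⟪x, b x⟫
          + c ^ 2 * ((2 + ‖x‖) * ‖x‖ / (1 + ‖x‖) ^ 2) ^ 2 / (2 * ‖x‖ ^ 2) * ⟪x, a x x⟫
        ≤ -(c / 2) * ((2 + ‖x‖) * ‖x‖ / (1 + ‖x‖) ^ 2) * |⟪x, b x⟫| / ‖x‖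
      ∧ (c * ((2 + ‖x‖) * ‖x‖ / (1 + ‖x‖) ^ 2) / ‖x‖) * ⟪x, b x⟫
          + c ^ 2 * ((2 + ‖x‖) * ‖x‖ / (1 + ‖x‖) ^ 2) ^ 2 / (2 * ‖x‖ ^ 2) * ⟪x, a x x⟫
        ≤ 0 := by
  obtain ⟨L₀, hL₀pos, hL₀⟩ := hH2 1 one_pos
  refine ⟨max (L + 1) L₀, lt_of_lt_of_le (by linarith) (le_max_left _ _), ?_⟩
  intro x hx
  have hxL : L < ‖x‖ := by
    have := le_trans (le_max_left (L + 1) L₀) hx; linarith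
  have hx0 : 0 < ‖x‖ := lt_trans hL hxL
  have hb : ⟪x, b x⟫ ≤ -1 * ‖x‖ := hL₀ x (le_trans (le_max_right _ _) hx)
  have hbneg : ⟪x, b x⟫ < 0 := by nlinarith
  have habs : |⟪x, b x⟫| = -⟪x, b x⟫ := abs_of_neg hbneg
  set t := ‖x‖ with ht
  set P := ⟪x, b x⟫ with hP
  set A := ⟪x, a x x⟫ with hA
  set r : ℝ := (2 + t) * t / (1 + t) ^ 2 with hr
  have hrpos : 0 < r := by positivity
  have hr1 : r ≤ 1 := by
    rw [hr, div_le_one (by positivity)]; nlinarith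
  have haKB : A ≤ K * t * (-P) := by rw [← habs]; exact hH3 x hxL
  have hA0 : 0 ≤ A := ha_psd x x
  have hcK' : c * K ≤ 1 := by
    rw [le_div_iff₀ hK] at hcK; nlinarith
  have hBpos : 0 < -P := by linarith
  have h1 : c * r * K ≤ 1 := by nlinarith
  have key : c * r / t * P + c ^ 2 * r ^ 2 / (2 * t ^ 2) * A
      ≤ -(c / 2) * r * |P| / t := by
    rw [habs]
    have step1 : c ^ 2 * r ^ 2 / (2 * t ^ 2) * A
        ≤ c ^ 2 * r ^ 2 / (2 * t ^ 2) * (K * t * (-P)) :=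
      mul_le_mul_of_nonneg_left haKB (by positivity)
    have heq : c * r / t * P + c ^ 2 * r ^ 2 / (2 * t ^ 2) * (K * t * (-P))
        = (c * r * P + c ^ 2 * r ^ 2 * K * (-P) / 2) / t := by
      field_simp
    have main : (c * r * P + c ^ 2 * r ^ 2 * K * (-P) / 2) / t
        ≤ -(c / 2) * r * -P / t := by
      rw [div_le_div_iff₀ hx0 hx0]
      have hX : 0 ≤ (1 - c * r * K) * (c * r * (-P) * t) :=
        mul_nonneg (by linarith) (by positivity)
      nlinarith
    linarith [heq ▸ (by linarith [step1] :
      c * r / t * P + c ^ 2 * r ^ 2 / (2 * t ^ 2) * A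
        ≤ c * r / t * P + c ^ 2 * r ^ 2 / (2 * t ^ 2) * (K * t * (-P)))]
  refine ⟨key, le_trans key ?_⟩
  rw [habs, show -(c / 2) * r * -P / t = -(c / 2 * r * -P / t) by ring]
  have : 0 ≤ c / 2 * r * -P / t := by positivity
  linarith
end

section
/- Convergence of the regularized rate integrals (step 1) of Section 6.2): Let T > 0, let v : [0,T] → ℝ^d and A : [0,T] → (d×d real matrices) be measurable maps such that A(s) is symmetric positive semidefinite for every s, let A⁺ : [0,T] → (d×d real matrices) be a measurable map such that A⁺(s) is the Moore–Penrose pseudoinverse of A(s) for every s, and assume A(s) A⁺(s) v(s) = v(s) for Lebesgue-a.e. s ∈ [0,T]. Then, as β → 0 from the right, ∫₀ᵀ ⟨v(s), (A(s) + βI)⁻¹ v(s)⟩ ds converges (in [0,∞], i.e. as an extended-nonnegative-real-valued Lebesgue integral) to ∫₀ᵀ ⟨v(s), A⁺(s) v(s)⟩ ds. -/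
open Matrix MeasureTheory Filter

namespace RegAux

variable {d : ℕ}

lemma psd_smul {c : ℝ} (hc : 0 ≤ c) {M : Matrix (Fin d) (Fin d) ℝ}
    (h : M.PosSemidef) : (c • M).PosSemidef := by
  refine .of_dotProduct_mulVec_nonneg ?_ fun x => ?_
  · show (c • M)ᴴ = c • M
    rw [conjTranspose_smul, h.1.eq, star_trivial]
  · rw [smul_mulVec, dotProduct_smul, smul_eq_mul]
    exact mul_nonneg hc (by simpa using h.dotProduct_mulVec_nonneg x)

lemma pd_smul_one {c : ℝ} (hc : 0 < c) :
    (c • (1 : Matrix (Fin d) (Fin d) ℝ)).PosDef := by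
  rw [smul_one_eq_diagonal]
  exact Matrix.PosDef.diagonal fun _ => hc

lemma reg_posDef {A : Matrix (Fin d) (Fin d) ℝ} (hA : A.PosSemidef) {β : ℝ} (hβ : 0 < β) :
    (A + β • (1 : Matrix (Fin d) (Fin d) ℝ)).PosDef :=
  Matrix.PosDef.posSemidef_add hA (pd_smul_one hβ)

lemma reg_mul_inv {A : Matrix (Fin d) (Fin d) ℝ} (hA : A.PosSemidef) {β : ℝ} (hβ : 0 < β) :
    (A + β • (1 : Matrix (Fin d) (Fin d) ℝ)) * (A + β • 1)⁻¹ = 1 :=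
  mul_nonsing_inv _ ((isUnit_iff_isUnit_det _).mp (reg_posDef hA hβ).isUnit)

lemma reg_inv_mul {A : Matrix (Fin d) (Fin d) ℝ} (hA : A.PosSemidef) {β : ℝ} (hβ : 0 < β) :
    (A + β • (1 : Matrix (Fin d) (Fin d) ℝ))⁻¹ * (A + β • 1) = 1 :=
  nonsing_inv_mul _ ((isUnit_iff_isUnit_det _).mp (reg_posDef hA hβ).isUnit)

lemma A_mul_inv_psd {A : Matrix (Fin d) (Fin d) ℝ} (hA : A.PosSemidef) {β : ℝ} (hβ : 0 < β) :
    (A * (A + β • (1 : Matrix (Fin d) (Fin d) ℝ))⁻¹).PosSemidef := by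
  set M := (A + β • (1 : Matrix (Fin d) (Fin d) ℝ))⁻¹ with hMdef
  have hMpd : M.PosDef := (reg_posDef hA hβ).inv
  have hinner : ((A + β • (1 : Matrix (Fin d) (Fin d) ℝ)) * A).PosSemidef := by
    have h1 : (A * A).PosSemidef := by
      have := posSemidef_conjTranspose_mul_self A
      rwa [hA.1.eq] at this
    have h2 : ((A + β • (1 : Matrix (Fin d) (Fin d) ℝ)) * A) = A * A + β • A := by
      rw [add_mul, smul_mul_assoc, one_mul]
    rw [h2]
    exact h1.add (psd_smul hβ.le hA)
  have key : M * ((A + β • (1 : Matrix (Fin d) (Fin d) ℝ)) * A) * Mᴴ = A * M := by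
    rw [hMpd.isHermitian.eq]
    calc M * ((A + β • (1 : Matrix (Fin d) (Fin d) ℝ)) * A) * M
        = (M * (A + β • 1)) * (A * M) := by rw [← mul_assoc, ← mul_assoc, mul_assoc _ _ M]
      _ = A * M := by rw [hMdef, reg_inv_mul hA hβ, one_mul]
  rw [← key]
  exact hinner.mul_mul_conjTranspose_same M

lemma A_mul_inv_eq {A : Matrix (Fin d) (Fin d) ℝ} (hA : A.PosSemidef) {β : ℝ} (hβ : 0 < β) :
    A * (A + β • (1 : Matrix (Fin d) (Fin d) ℝ))⁻¹
      = 1 - β • (A + β • (1 : Matrix (Fin d) (Fin d) ℝ))⁻¹ := by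
  have h := reg_mul_inv hA hβ
  rw [add_mul, smul_mul_assoc, one_mul] at h
  rw [eq_sub_iff_add_eq]
  exact h

lemma psd_quad_nonneg {M : Matrix (Fin d) (Fin d) ℝ} (h : M.PosSemidef) (x : Fin d → ℝ) :
    0 ≤ x ⬝ᵥ M *ᵥ x := by simpa using h.dotProduct_mulVec_nonneg x

lemma key_formula {A : Matrix (Fin d) (Fin d) ℝ} (hA : A.PosSemidef) {β : ℝ} (hβ : 0 < β)
    {v w : Fin d → ℝ} (hv : A *ᵥ w = v) :
    v ⬝ᵥ (A + β • (1 : Matrix (Fin d) (Fin d) ℝ))⁻¹ *ᵥ v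
      = v ⬝ᵥ w - β * (w ⬝ᵥ (A * (A + β • (1 : Matrix (Fin d) (Fin d) ℝ))⁻¹) *ᵥ w) := by
  set M := (A + β • (1 : Matrix (Fin d) (Fin d) ℝ))⁻¹ with hMdef
  have hveq : v = (A + β • (1 : Matrix (Fin d) (Fin d) ℝ)) *ᵥ w - β • w := by
    rw [add_mulVec, smul_mulVec, one_mulVec, ← hv]
    abel
  have hMv : M *ᵥ v = w - β • (M *ᵥ w) := by
    conv_lhs => rw [hveq]
    rw [mulVec_sub, mulVec_smul, mulVec_mulVec, hMdef, reg_inv_mul hA hβ, one_mulVec]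
  have hdot : v ⬝ᵥ M *ᵥ w = w ⬝ᵥ (A * M) *ᵥ w := by
    rw [← mulVec_mulVec, dotProduct_mulVec w A, ← mulVec_transpose,
      ← conjTranspose_eq_transpose_of_trivial, hA.1.eq, hv]
  rw [hMv, dotProduct_sub, dotProduct_smul, smul_eq_mul, hdot]

lemma quad_upper {A : Matrix (Fin d) (Fin d) ℝ} (hA : A.PosSemidef) {β : ℝ} (hβ : 0 < β)
    {v w : Fin d → ℝ} (hv : A *ᵥ w = v) :
    v ⬝ᵥ (A + β • (1 : Matrix (Fin d) (Fin d) ℝ))⁻¹ *ᵥ v ≤ v ⬝ᵥ w := by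
  rw [key_formula hA hβ hv]
  have := psd_quad_nonneg (A_mul_inv_psd hA hβ) w
  nlinarith

lemma quad_lower {A : Matrix (Fin d) (Fin d) ℝ} (hA : A.PosSemidef) {β : ℝ} (hβ : 0 < β)
    {v w : Fin d → ℝ} (hv : A *ᵥ w = v) :
    v ⬝ᵥ w - β * (w ⬝ᵥ w) ≤ v ⬝ᵥ (A + β • (1 : Matrix (Fin d) (Fin d) ℝ))⁻¹ *ᵥ v := by
  rw [key_formula hA hβ hv]
  have ht : w ⬝ᵥ (A * (A + β • (1 : Matrix (Fin d) (Fin d) ℝ))⁻¹) *ᵥ w ≤ w ⬝ᵥ w := by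
    rw [A_mul_inv_eq hA hβ, sub_mulVec, one_mulVec, dotProduct_sub, smul_mulVec,
      dotProduct_smul, smul_eq_mul]
    have := psd_quad_nonneg (reg_posDef hA hβ).inv.posSemidef w
    nlinarith
  nlinarith

lemma quad_antitone {A : Matrix (Fin d) (Fin d) ℝ} (hA : A.PosSemidef) {β₁ β₂ : ℝ}
    (h1 : 0 < β₁) (h12 : β₁ ≤ β₂) (v : Fin d → ℝ) :
    v ⬝ᵥ (A + β₂ • (1 : Matrix (Fin d) (Fin d) ℝ))⁻¹ *ᵥ v
      ≤ v ⬝ᵥ (A + β₁ • (1 : Matrix (Fin d) (Fin d) ℝ))⁻¹ *ᵥ v := by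
  have h2 : 0 < β₂ := lt_of_lt_of_le h1 h12
  set M₁ := (A + β₁ • (1 : Matrix (Fin d) (Fin d) ℝ))⁻¹ with hM₁
  set M₂ := (A + β₂ • (1 : Matrix (Fin d) (Fin d) ℝ))⁻¹ with hM₂
  have hN : ((A + β₂ • (1 : Matrix (Fin d) (Fin d) ℝ)) * (A + β₁ • 1)).PosDef := by
    have hexp : (A + β₂ • (1 : Matrix (Fin d) (Fin d) ℝ)) * (A + β₁ • 1)
        = (A * A + β₁ • A + β₂ • A) + (β₂ * β₁) • (1 : Matrix (Fin d) (Fin d) ℝ) := by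
      simp only [add_mul, mul_add, mul_smul_comm, smul_mul_assoc, one_mul, mul_one, smul_smul,
        smul_add]
      rw [mul_comm β₂ β₁]
      abel
    rw [hexp]
    have hAA : (A * A).PosSemidef := by
      have := posSemidef_conjTranspose_mul_self A
      rwa [hA.1.eq] at this
    exact Matrix.PosDef.posSemidef_add
      ((hAA.add (psd_smul h1.le hA)).add (psd_smul h2.le hA))
      (pd_smul_one (mul_pos h2 h1))
  have hdiff : M₁ - M₂ = (β₂ - β₁) • (M₁ * M₂) := by
    have e1 : M₁ * (A + β₂ • (1 : Matrix (Fin d) (Fin d) ℝ)) * M₂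
        - M₁ * (A + β₁ • 1) * M₂ = M₁ - M₂ := by
      rw [mul_assoc M₁ (A + β₂ • (1 : Matrix (Fin d) (Fin d) ℝ)) M₂, hM₂, reg_mul_inv hA h2,
        mul_one, hM₁, reg_inv_mul hA h1, one_mul]
    have e2 : M₁ * (A + β₂ • (1 : Matrix (Fin d) (Fin d) ℝ)) * M₂
        - M₁ * (A + β₁ • 1) * M₂ = (β₂ - β₁) • (M₁ * M₂) := by
      rw [← sub_mul, ← mul_sub, add_sub_add_left_eq_sub, ← sub_smul]
      simp only [mul_smul_comm, smul_mul_assoc, mul_one]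
    rw [← e1, e2]
  have hMM : (M₁ * M₂).PosSemidef := by
    have : M₁ * M₂ = ((A + β₂ • (1 : Matrix (Fin d) (Fin d) ℝ)) * (A + β₁ • 1))⁻¹ :=
      (Matrix.mul_inv_rev _ _).symm
    rw [this]
    exact hN.inv.posSemidef
  have hq : 0 ≤ v ⬝ᵥ (M₁ - M₂) *ᵥ v := by
    rw [hdiff, smul_mulVec, dotProduct_smul, smul_eq_mul]
    exact mul_nonneg (by linarith) (psd_quad_nonneg hMM v)
  rw [sub_mulVec, dotProduct_sub] at hq
  linarith

lemma measurable_det {M : ℝ → Matrix (Fin d) (Fin d) ℝ}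
    (h : ∀ i j, Measurable fun s => M s i j) : Measurable fun s => (M s).det := by
  simp_rw [Matrix.det_apply']
  exact Finset.measurable_sum _ fun σ _ =>
    (Finset.measurable_prod _ fun i _ => h _ _).const_mul _

lemma measurable_inv_entry {M : ℝ → Matrix (Fin d) (Fin d) ℝ}
    (h : ∀ i j, Measurable fun s => M s i j) (i j : Fin d) :
    Measurable fun s => (M s)⁻¹ i j := by
  simp_rw [Matrix.inv_def, Matrix.smul_apply, Ring.inverse_eq_inv', smul_eq_mul]
  refine Measurable.mul ?_ ?_
  · exact (measurable_det h).inv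
  · simp_rw [Matrix.adjugate_apply]
    apply measurable_det
    intro i' j'
    simp_rw [Matrix.updateRow_apply]
    by_cases hij : i' = j
    · simp [hij]
    · simpa [hij] using h i' j'

lemma measurable_quad {M : ℝ → Matrix (Fin d) (Fin d) ℝ}
    (hM : ∀ i j, Measurable fun s => M s i j) {v : ℝ → Fin d → ℝ} (hv : Measurable v) :
    Measurable fun s => v s ⬝ᵥ M s *ᵥ v s := by
  simp_rw [dotProduct, Matrix.mulVec, dotProduct]
  exact Finset.measurable_sum _ fun i _ =>
    ((measurable_pi_apply i).comp hv).mul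
      (Finset.measurable_sum _ fun j _ => (hM i j).mul ((measurable_pi_apply j).comp hv))

end RegAux

/-- Convergence of the regularized rate integrals: if `A(s)` is symmetric positive
semidefinite with Moore–Penrose pseudoinverse `A⁺(s)` and `A(s)A⁺(s)v(s) = v(s)` for
a.e. `s ∈ [0,T]`, then `∫₀ᵀ ⟨v(s), (A(s) + βI)⁻¹ v(s)⟩ ds → ∫₀ᵀ ⟨v(s), A⁺(s)v(s)⟩ ds`
in `[0,∞]` as `β → 0⁺`. -/
theorem regularized_rate_integral_convergence {d : ℕ} (hd : 1 ≤ d)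
    (T : ℝ) (hT : 0 < T)
    (v : ℝ → (Fin d → ℝ)) (hv : Measurable v)
    (A : ℝ → Matrix (Fin d) (Fin d) ℝ) (hA : ∀ i j, Measurable fun s => A s i j)
    (Ap : ℝ → Matrix (Fin d) (Fin d) ℝ) (hAp : ∀ i j, Measurable fun s => Ap s i j)
    (hpsd : ∀ s, (A s).PosSemidef)
    (h1 : ∀ s, A s * Ap s * A s = A s) (h2 : ∀ s, Ap s * A s * Ap s = Ap s)
    (h3 : ∀ s, (A s * Ap s)ᵀ = A s * Ap s) (h4 : ∀ s, (Ap s * A s)ᵀ = Ap s * A s)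
    (hae : ∀ᵐ s ∂(volume.restrict (Set.Icc (0 : ℝ) T)),
      A s *ᵥ (Ap s *ᵥ v s) = v s) :
    Tendsto (fun β : ℝ =>
        ∫⁻ s in Set.Icc (0 : ℝ) T,
          ENNReal.ofReal (v s ⬝ᵥ ((A s + β • (1 : Matrix (Fin d) (Fin d) ℝ))⁻¹ *ᵥ v s)))
      (nhdsWithin 0 (Set.Ioi 0))
      (nhds (∫⁻ s in Set.Icc (0 : ℝ) T, ENNReal.ofReal (v s ⬝ᵥ (Ap s *ᵥ v s)))) := by
  classical
  have hmeas : ∀ β : ℝ, Measurable fun s =>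
      ENNReal.ofReal (v s ⬝ᵥ ((A s + β • (1 : Matrix (Fin d) (Fin d) ℝ))⁻¹ *ᵥ v s)) := by
    intro β
    apply ENNReal.measurable_ofReal.comp
    apply RegAux.measurable_quad _ hv
    apply RegAux.measurable_inv_entry
    intro i j
    simp_rw [Matrix.add_apply, Matrix.smul_apply, smul_eq_mul]
    exact (hA i j).add measurable_const
  set G : ℝ → ENNReal := fun β => ∫⁻ s in Set.Icc (0 : ℝ) T,
      ENNReal.ofReal (v s ⬝ᵥ ((A s + β • (1 : Matrix (Fin d) (Fin d) ℝ))⁻¹ *ᵥ v s)) with hG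
  set L : ENNReal := ∫⁻ s in Set.Icc (0 : ℝ) T,
      ENNReal.ofReal (v s ⬝ᵥ (Ap s *ᵥ v s)) with hL
  have hanti : ∀ {β₁ β₂ : ℝ}, 0 < β₁ → β₁ ≤ β₂ → G β₂ ≤ G β₁ := by
    intro β₁ β₂ hb1 hb12
    exact lintegral_mono fun s => ENNReal.ofReal_le_ofReal
      (RegAux.quad_antitone (hpsd s) hb1 hb12 (v s))
  set b : ℕ → ℝ := fun n => 1 / (n + 1 : ℝ) with hb
  have hbpos : ∀ n, 0 < b n := fun n => by positivity
  have hbanti : ∀ {n m : ℕ}, n ≤ m → b m ≤ b n := by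
    intro n m hnm
    apply one_div_le_one_div_of_le (by positivity)
    have : (n : ℝ) ≤ m := Nat.cast_le.mpr hnm
    linarith
  have hseq : Tendsto (fun n => G (b n)) atTop (nhds L) := by
    apply MeasureTheory.lintegral_tendsto_of_tendsto_of_monotone
    · exact fun n => (hmeas (b n)).aemeasurable
    · refine ae_of_all _ fun s n m hnm => ?_
      exact ENNReal.ofReal_le_ofReal
        (RegAux.quad_antitone (hpsd s) (hbpos m) (hbanti hnm) (v s))
    · filter_upwards [hae] with s hs
      have hreal : Tendsto
          (fun n => v s ⬝ᵥ ((A s + b n • (1 : Matrix (Fin d) (Fin d) ℝ))⁻¹ *ᵥ v s)) atTop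
          (nhds (v s ⬝ᵥ (Ap s *ᵥ v s))) := by
        apply tendsto_of_tendsto_of_tendsto_of_le_of_le
          (g := fun n => v s ⬝ᵥ (Ap s *ᵥ v s) - b n * ((Ap s *ᵥ v s) ⬝ᵥ (Ap s *ᵥ v s)))
          (h := fun _ => v s ⬝ᵥ (Ap s *ᵥ v s))
        · have h0 : Tendsto b atTop (nhds (0 : ℝ)) := by
            rw [hb]; exact tendsto_one_div_add_atTop_nhds_zero_nat
          simpa using (tendsto_const_nhds (x := v s ⬝ᵥ (Ap s *ᵥ v s)) (f := atTop)).sub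
            (h0.mul (tendsto_const_nhds (x := (Ap s *ᵥ v s) ⬝ᵥ (Ap s *ᵥ v s))))
        · exact tendsto_const_nhds
        · exact fun n => RegAux.quad_lower (hpsd s) (hbpos n) hs
        · exact fun n => RegAux.quad_upper (hpsd s) (hbpos n) hs
      exact (ENNReal.continuous_ofReal.tendsto _).comp hreal
  have hGmono : Monotone fun n => G (b n) := fun n m hnm => hanti (hbpos m) (hbanti hnm)
  have hGle : ∀ n, G (b n) ≤ L := fun n => hGmono.ge_of_tendsto hseq n
  have hGle' : ∀ β : ℝ, 0 < β → G β ≤ L := by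
    intro β hβ
    obtain ⟨n, hn⟩ := exists_nat_one_div_lt hβ
    exact (hanti (hbpos n) hn.le).trans (hGle n)
  rw [tendsto_order]
  constructor
  · intro c hc
    obtain ⟨n, hn⟩ := (hseq.eventually (eventually_gt_nhds hc)).exists
    filter_upwards [Ioo_mem_nhdsGT_of_mem (Set.mem_Ico.mpr ⟨le_refl 0, hbpos n⟩)] with β hβ
    exact hn.trans_le (hanti hβ.1 hβ.2.le)
  · intro c hc
    filter_upwards [self_mem_nhdsWithin] with β hβ
    exact lt_of_le_of_lt (hGle' β hβ) hc
end
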